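/- arXiv:1511.06445 — 3 statements merged into one kernel-verified Lean document; each statement's English description precedes it below -/
import Mathlib

section
/- Let n be a natural number and let f : ℚ[x₁,…,xₙ] → ℚ[y₁,…,yₙ] be a ring homomorphism between polynomial rings over ℚ in the same number n of variables, such that the target ℚ[y₁,…,yₙ], viewed as a module over the source ℚ[x₁,…,xₙ] via f, is finitely generated (i.e. f is a finite morphism). Then f is injective. -/
open MvPolynomial Polynomial

namespace FRMIaux

variable {n : ℕ}

local notation "R" => MvPolynomial (Fin n) ℚ

/-- Chain rule for partial derivatives of a polynomial substitution. -/
lemma pderiv_aeval (g : Fin n → R) (k : Fin n) (a : R) :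
    pderiv k (aeval g a) =
      ∑ i, aeval g (pderiv i a) * pderiv k (g i) := by
  classical
  induction a using MvPolynomial.induction_on with
  | C q =>
    rw [MvPolynomial.aeval_C, MvPolynomial.algebraMap_eq, pderiv_C]
    simp only [map_zero, pderiv_C, zero_mul, Finset.sum_const_zero]
  | add p q hp hq => simp only [map_add, hp, hq, add_mul, Finset.sum_add_distrib]
  | mul_X p j hp =>
    rw [map_mul, MvPolynomial.aeval_X, pderiv_mul, hp]
    have key : ∀ i : Fin n,
        (MvPolynomial.aeval g) ((pderiv i) (p * MvPolynomial.X j)) * (pderiv k) (g i)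
        = (MvPolynomial.aeval g) ((pderiv i) p) * (pderiv k) (g i) * g j
          + (if i = j then (MvPolynomial.aeval g) p * (pderiv k) (g i) else 0) := by
      intro i
      rw [pderiv_mul, MvPolynomial.pderiv_X, map_add, map_mul, MvPolynomial.aeval_X, map_mul]
      rcases eq_or_ne i j with h | h
      · subst h
        rw [if_pos rfl, Pi.single_eq_same, map_one, mul_one]
        ring
      · rw [if_neg h, Pi.single_eq_of_ne (Ne.symm h), map_zero, mul_zero, add_zero]
        ring
    simp only [key, Finset.sum_add_distrib, Finset.sum_ite_eq', Finset.mem_univ, if_true,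
      ← Finset.sum_mul]


/-- Derivation applied to `eval₂` of a one-variable polynomial. -/
lemma derivation_eval₂ (D : Derivation ℚ R R) (f : R →+* R) (x : R) (P : Polynomial R) :
    D (Polynomial.eval₂ f x P) =
      P.sum (fun m c => D (f c) * x ^ m)
        + Polynomial.eval₂ f x (Polynomial.derivative P) * D x := by
  classical
  induction P using Polynomial.induction_on' with
  | add p q hp hq =>
    rw [Polynomial.eval₂_add, map_add, hp, hq, Polynomial.derivative_add, Polynomial.eval₂_add,
      Polynomial.sum_add_index _ _ _ (fun m => by simp) (fun m c c' => by rw [map_add, map_add, add_mul])]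
    ring
  | monomial m c =>
    rw [Polynomial.eval₂_monomial, Polynomial.derivative_monomial, Polynomial.eval₂_monomial,
      Polynomial.sum_monomial_index _ _ (by simp), Derivation.leibniz, Derivation.leibniz_pow]
    simp only [smul_eq_mul, nsmul_eq_mul, map_mul, map_natCast]
    ring


lemma sub_single_add (e : Fin n →₀ ℕ) (i : Fin n) (hi : e i ≠ 0) :
    e = (e - Finsupp.single i 1) + Finsupp.single i 1 := by
  classical
  ext a
  rw [Finsupp.add_apply, Finsupp.tsub_apply, Finsupp.single_apply]
  by_cases h : i = a
  · subst h; simp; omega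
  · simp [h]

lemma sum_sub_single (e : Fin n →₀ ℕ) (i : Fin n) (hi : e i ≠ 0) :
    (e - Finsupp.single i 1).sum (fun _ m => m) + 1 = e.sum (fun _ m => m) := by
  classical
  conv_rhs => rw [sub_single_add e i hi]
  rw [Finsupp.sum_add_index' (fun _ => rfl) (fun _ _ _ => rfl),
    Finsupp.sum_single_index rfl]

lemma coeff_pderiv (p : R) (i : Fin n) (d : Fin n →₀ ℕ) (hd : d i ≠ 0) :
    MvPolynomial.coeff (d - Finsupp.single i 1) (pderiv i p) =
      (d i : ℚ) * MvPolynomial.coeff d p := by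
  classical
  conv_lhs => rw [p.as_sum, map_sum]
  simp only [pderiv_monomial, MvPolynomial.coeff_sum, MvPolynomial.coeff_monomial]
  rw [Finset.sum_eq_single d]
  · rw [if_pos rfl, mul_comm]
  · intro e he hne
    by_cases hei : e i = 0
    · split_ifs <;> simp [hei]
    · rw [if_neg]
      intro hcontra
      apply hne
      ext a
      have h2 := congrFun (congrArg (fun f : Fin n →₀ ℕ => (f : Fin n → ℕ)) hcontra) a
      simp only [Finsupp.coe_tsub, Pi.sub_apply, Finsupp.single_apply] at h2
      by_cases h : i = a
      · subst h; simp at h2; omega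
      · simp [h] at h2; omega
  · intro hd'
    rw [if_pos rfl, MvPolynomial.notMem_support_iff.mp hd', zero_mul]


lemma exists_support_ne (p : R) (i : Fin n) (hp : pderiv i p ≠ 0) :
    ∃ e ∈ p.support, e i ≠ 0 := by
  classical
  by_contra h
  push_neg at h
  apply hp
  conv_lhs => rw [p.as_sum, map_sum]
  refine Finset.sum_eq_zero fun e he => ?_
  rw [pderiv_monomial, h e he, Nat.cast_zero, mul_zero, map_zero]

lemma totalDegree_pderiv_lt (p : R) (i : Fin n) (hp : pderiv i p ≠ 0) :
    (pderiv i p).totalDegree < p.totalDegree := by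
  classical
  obtain ⟨e₀, he₀, hi₀⟩ := exists_support_ne p i hp
  have hpos : 0 < p.totalDegree := by
    have h1 : e₀.sum (fun _ m => m) ≤ p.totalDegree := MvPolynomial.le_totalDegree he₀
    have h2 : e₀ i ≤ e₀.sum (fun _ m => m) := by
      refine Finset.single_le_sum (f := fun a => e₀ a) (fun _ _ => Nat.zero_le _) ?_
      exact Finsupp.mem_support_iff.mpr hi₀
    omega
  have hrw : pderiv i p = ∑ e ∈ p.support,
      MvPolynomial.monomial (e - Finsupp.single i 1) (MvPolynomial.coeff e p * (e i : ℚ)) := by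
    conv_lhs => rw [p.as_sum, map_sum]
    simp only [pderiv_monomial]
  rw [hrw]
  refine lt_of_le_of_lt (MvPolynomial.totalDegree_finset_sum _ _) ?_
  rw [Finset.sup_lt_iff (by simpa using hpos)]
  intro e he
  by_cases hc : MvPolynomial.coeff e p * (e i : ℚ) = 0
  · rw [hc, map_zero, MvPolynomial.totalDegree_zero]; exact hpos
  · rw [MvPolynomial.totalDegree_monomial _ hc]
    have hei : e i ≠ 0 := fun h => hc (by rw [h, Nat.cast_zero, mul_zero])
    have h3 := sum_sub_single e i hei
    have h4 : e.sum (fun _ m => m) ≤ p.totalDegree := MvPolynomial.le_totalDegree he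
    omega

end FRMIaux


open FRMIaux in
/-- A finite ring homomorphism between polynomial rings over `ℚ` on the same
number `n` of variables is injective. -/
theorem finite_ringHom_mvPolynomial_injective (n : ℕ)
    (f : MvPolynomial (Fin n) ℚ →+* MvPolynomial (Fin n) ℚ)
    (hf : f.Finite) :
    Function.Injective f := by
  classical
  by_contra hinj
  -- a nonzero kernel element
  have hker : ∃ p : MvPolynomial (Fin n) ℚ, p ≠ 0 ∧ f p = 0 := by
    rw [Function.not_injective_iff] at hinj
    obtain ⟨a, b, hab, hne⟩ := hinj
    exact ⟨a - b, sub_ne_zero.mpr hne, by rw [map_sub, hab, sub_self]⟩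
  set g : Fin n → MvPolynomial (Fin n) ℚ := fun i => f (MvPolynomial.X i) with hg
  have hfa : ∀ a, f a = MvPolynomial.aeval g a := by
    have heq : f = (MvPolynomial.aeval g :
        MvPolynomial (Fin n) ℚ →ₐ[ℚ] MvPolynomial (Fin n) ℚ).toRingHom := by
      apply MvPolynomial.ringHom_ext
      · intro q
        exact RingHom.congr_fun (Subsingleton.elim (f.comp MvPolynomial.C)
          ((MvPolynomial.aeval g : MvPolynomial (Fin n) ℚ →ₐ[ℚ]
            MvPolynomial (Fin n) ℚ).toRingHom.comp MvPolynomial.C)) q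
      · intro i
        simp [hg]
    intro a; rw [heq]; rfl
  -- Claim 1 : the Jacobian has a nontrivial left-kernel vector
  obtain ⟨c, i₀, hc₀, hcM⟩ :
      ∃ (c : Fin n → MvPolynomial (Fin n) ℚ) (i₀ : Fin n),
        c i₀ ≠ 0 ∧ ∀ k, ∑ i, c i * MvPolynomial.pderiv k (g i) = 0 := by
    have hexd : ∃ d, ∃ p : MvPolynomial (Fin n) ℚ, p ≠ 0 ∧ f p = 0 ∧ p.totalDegree = d := by
      obtain ⟨p, h1, h2⟩ := hker; exact ⟨p.totalDegree, p, h1, h2, rfl⟩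
    obtain ⟨p₀, hp0, hfp0, hdeg⟩ := Nat.find_spec hexd
    have hmin : ∀ q : MvPolynomial (Fin n) ℚ, q ≠ 0 → f q = 0 →
        Nat.find hexd ≤ q.totalDegree :=
      fun q h1 h2 => Nat.find_min' hexd ⟨q, h1, h2, rfl⟩
    have htd : p₀.totalDegree ≠ 0 := by
      intro h0
      have hC : p₀ = MvPolynomial.C (MvPolynomial.coeff 0 p₀) := by
        ext m
        rw [MvPolynomial.coeff_C]
        by_cases hm : (0 : Fin n →₀ ℕ) = m
        · rw [if_pos hm, ← hm]
        · rw [if_neg hm]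
          by_contra hne0
          have hmem : m ∈ p₀.support := MvPolynomial.mem_support_iff.mpr hne0
          have hall := (MvPolynomial.totalDegree_eq_zero_iff _ p₀).mp h0 m hmem
          exact hm (by ext x; simp [hall x])
      have hfp : f (MvPolynomial.C (MvPolynomial.coeff 0 p₀))
          = MvPolynomial.C (MvPolynomial.coeff 0 p₀) := by
        rw [hfa, MvPolynomial.aeval_C, MvPolynomial.algebraMap_eq]
      apply hp0
      rw [hC, ← hfp, ← hC, hfp0]
    have hex2 : ¬ ∀ m ∈ p₀.support, ∀ x, m x = 0 :=
      fun h => htd ((MvPolynomial.totalDegree_eq_zero_iff _ p₀).mpr h)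
    push_neg at hex2
    obtain ⟨d, hd, i, hdi⟩ := hex2
    have hpd : MvPolynomial.pderiv i p₀ ≠ 0 := by
      intro h
      have hcp := coeff_pderiv p₀ i d hdi
      rw [h] at hcp
      simp only [MvPolynomial.coeff_zero] at hcp
      have hc := MvPolynomial.mem_support_iff.mp hd
      rcases mul_eq_zero.mp hcp.symm with h' | h'
      · exact hdi (Nat.cast_eq_zero.mp h')
      · exact hc h'
    have hfpd : f (MvPolynomial.pderiv i p₀) ≠ 0 := by
      intro h
      have hlt := totalDegree_pderiv_lt p₀ i hpd
      rw [hdeg] at hlt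
      exact absurd (hmin _ hpd h) (not_le.mpr hlt)
    refine ⟨fun i' => f (MvPolynomial.pderiv i' p₀), i, hfpd, fun k => ?_⟩
    have h0 : MvPolynomial.pderiv k (MvPolynomial.aeval g p₀) = 0 := by
      rw [← hfa, hfp0, map_zero]
    rw [pderiv_aeval] at h0
    rw [← h0]
    exact Finset.sum_congr rfl fun i' _ => by simp only [hfa]
  -- Claim 2 : the Jacobian hits a scaled basis vector on each row index
  have claim2 : ∀ j : Fin n, ∃ (u : Fin n → MvPolynomial (Fin n) ℚ)
      (s : MvPolynomial (Fin n) ℚ), s ≠ 0 ∧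
        ∀ k, ∑ i, u i * MvPolynomial.pderiv k (g i) = if k = j then s else 0 := by
    intro j
    obtain ⟨P₁, hP₁monic, hP₁⟩ := hf.to_isIntegral (MvPolynomial.X j)
    have hexd : ∃ d, ∃ P : Polynomial (MvPolynomial (Fin n) ℚ),
        Polynomial.eval₂ f (MvPolynomial.X j) P = 0 ∧ f P.leadingCoeff ≠ 0 ∧
          P.natDegree = d :=
      ⟨P₁.natDegree, P₁, hP₁, by rw [hP₁monic.leadingCoeff, map_one]; exact one_ne_zero, rfl⟩
    obtain ⟨P, hP0, hPlc, hPd⟩ := Nat.find_spec hexd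
    have hmin : ∀ Q : Polynomial (MvPolynomial (Fin n) ℚ),
        Polynomial.eval₂ f (MvPolynomial.X j) Q = 0 → f Q.leadingCoeff ≠ 0 →
          Nat.find hexd ≤ Q.natDegree :=
      fun Q h1 h2 => Nat.find_min' hexd ⟨Q, h1, h2, rfl⟩
    have hdP : P.natDegree ≠ 0 := by
      intro h
      have hlc0 : P.leadingCoeff = P.coeff 0 := by rw [Polynomial.leadingCoeff, h]
      rw [Polynomial.eq_C_of_natDegree_eq_zero h, Polynomial.eval₂_C] at hP0
      rw [hlc0] at hPlc
      exact hPlc hP0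
    have hsne : Polynomial.eval₂ f (MvPolynomial.X j) (Polynomial.derivative P) ≠ 0 := by
      intro h0
      set Q := Polynomial.derivative P with hQ
      have hlcQ : Q.coeff (P.natDegree - 1) =
          P.leadingCoeff * (P.natDegree : MvPolynomial (Fin n) ℚ) := by
        rw [hQ, Polynomial.coeff_derivative, Nat.sub_add_cancel (Nat.one_le_iff_ne_zero.mpr hdP),
          Polynomial.leadingCoeff]
        congr 1
        rw [← Nat.cast_succ]
        congr 1
        omega
      have hlcQne : f (Q.coeff (P.natDegree - 1)) ≠ 0 := by
        rw [hlcQ, map_mul, map_natCast]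
        exact mul_ne_zero hPlc (Nat.cast_ne_zero.mpr hdP)
      have hQdeg : Q.natDegree = P.natDegree - 1 := by
        refine le_antisymm ?_ ?_
        · have hlt := Polynomial.natDegree_derivative_lt hdP
          rw [← hQ] at hlt
          omega
        · exact Polynomial.le_natDegree_of_ne_zero fun hz => hlcQne (by rw [hz, map_zero])
      have hQlc : f Q.leadingCoeff ≠ 0 := by
        rw [Polynomial.leadingCoeff, hQdeg]; exact hlcQne
      have hle := hmin Q h0 hQlc
      rw [hQdeg, ← hPd] at hle
      omega
    refine ⟨fun i => -(P.sum fun m cm =>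
        f (MvPolynomial.pderiv i cm) * (MvPolynomial.X j : MvPolynomial (Fin n) ℚ) ^ m),
      Polynomial.eval₂ f (MvPolynomial.X j) (Polynomial.derivative P), hsne, fun k => ?_⟩
    have hD := derivation_eval₂ (n := n) (MvPolynomial.pderiv k) f (MvPolynomial.X j) P
    rw [hP0, map_zero] at hD
    have hswap : P.sum (fun m cm => MvPolynomial.pderiv k (f cm) *
          (MvPolynomial.X j : MvPolynomial (Fin n) ℚ) ^ m)
        = ∑ i, (P.sum fun m cm => f (MvPolynomial.pderiv i cm) *
            (MvPolynomial.X j : MvPolynomial (Fin n) ℚ) ^ m) *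
              MvPolynomial.pderiv k (g i) := by
      rw [Polynomial.sum]
      have hterm : ∀ m ∈ P.support, MvPolynomial.pderiv k (f (P.coeff m)) *
          (MvPolynomial.X j : MvPolynomial (Fin n) ℚ) ^ m
          = ∑ i, f (MvPolynomial.pderiv i (P.coeff m)) *
              (MvPolynomial.X j : MvPolynomial (Fin n) ℚ) ^ m *
                MvPolynomial.pderiv k (g i) := by
        intro m _
        rw [hfa (P.coeff m), pderiv_aeval, Finset.sum_mul]
        refine Finset.sum_congr rfl fun i _ => ?_
        rw [← hfa (MvPolynomial.pderiv i (P.coeff m))]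
        ring
      rw [Finset.sum_congr rfl hterm, Finset.sum_comm]
      refine Finset.sum_congr rfl fun i _ => ?_
      rw [Polynomial.sum, Finset.sum_mul]
    rw [hswap] at hD
    have hDX : MvPolynomial.pderiv k (MvPolynomial.X j : MvPolynomial (Fin n) ℚ)
        = if k = j then 1 else 0 := by
      by_cases hk : k = j
      · subst hk; rw [MvPolynomial.pderiv_X_self, if_pos rfl]
      · rw [MvPolynomial.pderiv_X_of_ne (Ne.symm hk), if_neg hk]
    rw [hDX] at hD
    have h2 := add_eq_zero_iff_eq_neg.mp hD.symm
    simp only [neg_mul, Finset.sum_neg_distrib, h2, neg_neg, mul_ite, mul_one, mul_zero]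
  -- pass to the fraction field and derive a contradiction
  let K := FractionRing (MvPolynomial (Fin n) ℚ)
  let ι : MvPolynomial (Fin n) ℚ →+* K := algebraMap _ _
  have hιinj : Function.Injective ι := IsFractionRing.injective _ _
  let A : Matrix (Fin n) (Fin n) K := Matrix.of fun i k => ι (MvPolynomial.pderiv k (g i))
  let T : (Fin n → K) →ₗ[K] (Fin n → K) := A.vecMulLinear
  have hTapply : ∀ (v : Fin n → MvPolynomial (Fin n) ℚ) (k : Fin n),
      T (fun i => ι (v i)) k = ι (∑ i, v i * MvPolynomial.pderiv k (g i)) := by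
    intro v k
    simp only [T, A, Matrix.vecMulLinear_apply, Matrix.vecMul, dotProduct, Matrix.of_apply,
      map_sum, map_mul]
  have hsurj : Function.Surjective T := by
    have hrange : ∀ j, (fun k => if k = j then (1 : K) else 0) ∈ LinearMap.range T := by
      intro j
      obtain ⟨u, s, hsne, hu⟩ := claim2 j
      have hιs : ι s ≠ 0 := fun h => hsne (hιinj (by rw [h, map_zero]))
      refine ⟨(ι s)⁻¹ • fun i => ι (u i), ?_⟩
      rw [map_smul]
      funext k
      rw [Pi.smul_apply, hTapply u k, hu k]
      by_cases hk : k = j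
      · rw [if_pos hk, if_pos hk, smul_eq_mul, inv_mul_cancel₀ hιs]
      · rw [if_neg hk, if_neg hk, map_zero, smul_zero]
    intro v
    have hv : v = ∑ j, v j • (fun k => if k = j then (1 : K) else 0) := by
      funext k
      rw [Finset.sum_apply]
      simp only [Pi.smul_apply, smul_eq_mul, mul_ite, mul_one, mul_zero]
      rw [Finset.sum_ite_eq Finset.univ k v]
      simp
    have hmem : v ∈ LinearMap.range T := by
      rw [hv]
      exact Submodule.sum_mem _ fun j _ => Submodule.smul_mem _ _ (hrange j)
    exact hmem
  have hTinj : Function.Injective T := LinearMap.injective_iff_surjective.mpr hsurj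
  have hczero : (fun i => ι (c i)) = (0 : Fin n → K) := by
    apply hTinj
    rw [map_zero]
    funext k
    rw [hTapply c k, hcM k, map_zero, Pi.zero_apply]
  exact hc₀ (hιinj (by rw [congrFun hczero i₀, Pi.zero_apply, map_zero]))
end

section
/- Let m ≥ 1 and consider the polynomial ring S = ℚ[q₁,…,q_m, r₁,…,r_m] in 2m variables. Setting q₀ = r₀ = 1 and q_j = r_j = 0 for j > m, define for each 1 ≤ i ≤ 2m the element P_i = Σ_{j+k=i} q_j · r_k ∈ S. Then the 2m elements P₁,…,P_{2m} are algebraically independent over ℚ. -/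
open MvPolynomial

section Aux

variable {R : Type*} [CommSemiring R]


lemma coeff_prod_one_add_C_mul_X (s : Multiset R) (n : ℕ) :
    ((s.map fun r => 1 + Polynomial.C r * Polynomial.X).prod : Polynomial R).coeff n = s.esymm n := by
  induction s using Multiset.induction_on generalizing n with
  | empty =>
    simp only [Multiset.map_zero, Multiset.prod_zero, Polynomial.coeff_one, Multiset.esymm]
    cases n with
    | zero => simp [Multiset.powersetCard_zero_left]
    | succ n => simp [Multiset.powersetCard_zero_right]
  | cons a s ih =>
    rw [Multiset.map_cons, Multiset.prod_cons, add_mul, one_mul, mul_assoc,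
      Polynomial.coeff_add, Polynomial.coeff_C_mul]
    cases n with
    | zero =>
      rw [Polynomial.coeff_X_mul_zero, mul_zero, add_zero, ih, Multiset.esymm, Multiset.esymm,
        Multiset.powersetCard_zero_left, Multiset.powersetCard_zero_left]
    | succ n =>
      rw [Polynomial.coeff_X_mul, ih, ih, Multiset.esymm, Multiset.esymm, Multiset.esymm,
        Multiset.powersetCard_cons, Multiset.map_add, Multiset.sum_add, Multiset.map_map]
      rw [← Multiset.sum_map_mul_left]
      have : Multiset.map (fun i => a * i.prod) (Multiset.powersetCard n s) =
          Multiset.map (Multiset.prod ∘ Multiset.cons a) (Multiset.powersetCard n s) :=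
        Multiset.map_congr rfl fun t _ => by simp
      rw [this]

lemma Multiset.esymm_add' (s t : Multiset R) (n : ℕ) :
    (s + t).esymm n = ∑ jk ∈ Finset.HasAntidiagonal.antidiagonal n, s.esymm jk.1 * t.esymm jk.2 := by
  rw [← coeff_prod_one_add_C_mul_X, Multiset.map_add, Multiset.prod_add, Polynomial.coeff_mul]
  simp_rw [coeff_prod_one_add_C_mul_X]

lemma esymm_eq_zero_of_card_lt {σ : Type*} [Fintype σ] {n : ℕ} (h : Fintype.card σ < n) :
    esymm σ R n = 0 := by
  rw [esymm, Finset.powersetCard_eq_empty.2 (by simpa using h), Finset.sum_empty]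

lemma esymm_sum_type {α β : Type*} [Fintype α] [Fintype β] (n : ℕ) :
    esymm (α ⊕ β) R n =
      ∑ jk ∈ Finset.HasAntidiagonal.antidiagonal n,
        MvPolynomial.aeval (X ∘ Sum.inl) (esymm α R jk.1) * MvPolynomial.aeval (X ∘ Sum.inr) (esymm β R jk.2) := by
  have huniv : (Finset.univ : Finset (α ⊕ β)).val =
      (Finset.univ : Finset α).val.map Sum.inl + (Finset.univ : Finset β).val.map Sum.inr := by
    rw [← Finset.univ_disjSum_univ, Finset.val_disjSum]; rfl
  rw [congrFun (esymm_eq_multiset_esymm (α ⊕ β) R) n, huniv, Multiset.map_add,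
    Multiset.esymm_add']
  refine Finset.sum_congr rfl fun jk _ => ?_
  rw [aeval_esymm_eq_multiset_esymm, aeval_esymm_eq_multiset_esymm, Multiset.map_map,
    Multiset.map_map]

end Aux

/-- In `S = ℚ[q₁,…,qₘ,r₁,…,rₘ]`, with `q₀ = r₀ = 1` and `qⱼ = rⱼ = 0` for
`j > m`, the elements `Pᵢ = ∑_{j+k=i} qⱼ rₖ` for `1 ≤ i ≤ 2m` are
algebraically independent over `ℚ`. -/
theorem algebraicIndependent_whitney_sum_classes_odd (m : ℕ) (hm : 1 ≤ m)
    (q r : ℕ → MvPolynomial (Fin m ⊕ Fin m) ℚ)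
    (hq0 : q 0 = 1)
    (hqX : ∀ j : ℕ, ∀ h : 1 ≤ j, ∀ h' : j ≤ m,
      q j = X (Sum.inl ⟨j - 1, by omega⟩))
    (hq_top : ∀ j : ℕ, m < j → q j = 0)
    (hr0 : r 0 = 1)
    (hrX : ∀ j : ℕ, ∀ h : 1 ≤ j, ∀ h' : j ≤ m,
      r j = X (Sum.inr ⟨j - 1, by omega⟩))
    (hr_top : ∀ j : ℕ, m < j → r j = 0) :
    AlgebraicIndependent ℚ
      (fun i : Fin (2 * m) =>
        ∑ jk ∈ Finset.HasAntidiagonal.antidiagonal ((i : ℕ) + 1), q jk.1 * r jk.2) := by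
  set g : Fin m ⊕ Fin m → MvPolynomial (Fin m ⊕ Fin m) ℚ :=
    Sum.elim (fun j => MvPolynomial.aeval (X ∘ Sum.inl) (esymm (Fin m) ℚ ((j : ℕ) + 1)))
             (fun j => MvPolynomial.aeval (X ∘ Sum.inr) (esymm (Fin m) ℚ ((j : ℕ) + 1)))
    with hg
  set f : MvPolynomial (Fin m ⊕ Fin m) ℚ →ₐ[ℚ] MvPolynomial (Fin m ⊕ Fin m) ℚ :=
    MvPolynomial.aeval g with hf
  have hq : ∀ j : ℕ, f (q j) =
      MvPolynomial.aeval (X ∘ Sum.inl) (esymm (Fin m) ℚ j) := by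
    intro j
    rcases Nat.lt_or_ge m j with h | h
    · rw [hq_top j h, map_zero, esymm_eq_zero_of_card_lt (by simpa using h), map_zero]
    · rcases Nat.eq_zero_or_pos j with rfl | hj
      · rw [hq0, map_one, esymm_zero, map_one]
      · rw [hqX j hj h, hf, aeval_X, hg]
        simp only [Sum.elim_inl]
        rw [show ((⟨j - 1, by omega⟩ : Fin m) : ℕ) + 1 = j by simp; omega]
  have hr : ∀ j : ℕ, f (r j) =
      MvPolynomial.aeval (X ∘ Sum.inr) (esymm (Fin m) ℚ j) := by
    intro j
    rcases Nat.lt_or_ge m j with h | h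
    · rw [hr_top j h, map_zero, esymm_eq_zero_of_card_lt (by simpa using h), map_zero]
    · rcases Nat.eq_zero_or_pos j with rfl | hj
      · rw [hr0, map_one, esymm_zero, map_one]
      · rw [hrX j hj h, hf, aeval_X, hg]
        simp only [Sum.elim_inr]
        rw [show ((⟨j - 1, by omega⟩ : Fin m) : ℕ) + 1 = j by simp; omega]
  have key : (⇑f ∘ fun i : Fin (2 * m) =>
        ∑ jk ∈ Finset.HasAntidiagonal.antidiagonal ((i : ℕ) + 1), q jk.1 * r jk.2)
      = fun i : Fin (2 * m) => esymm (Fin m ⊕ Fin m) ℚ ((i : ℕ) + 1) := by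
    funext i
    simp only [Function.comp_apply, map_sum, map_mul, hq, hr]
    exact (esymm_sum_type _).symm
  have hind : AlgebraicIndependent ℚ
      (fun i : Fin (2 * m) => esymm (Fin m ⊕ Fin m) ℚ ((i : ℕ) + 1)) := by
    rw [algebraicIndependent_iff_injective_aeval]
    have hcard : 2 * m ≤ Fintype.card (Fin m ⊕ Fin m) := by simp [two_mul]
    have h1 := MvPolynomial.esymmAlgHom_injective (σ := Fin m ⊕ Fin m) (n := 2 * m) ℚ hcard
    intro p1 p2 hp
    apply h1
    refine Subtype.ext ?_
    rw [esymmAlgHom_apply, esymmAlgHom_apply]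
    exact hp
  exact AlgebraicIndependent.of_comp f (key ▸ hind)
end

section
/- Let m ≥ 1 and consider the polynomial ring S = ℚ[q₁,…,q_{m−1}, u, r₁,…,r_{m−1}, v] in 2m variables. Setting q₀ = r₀ = 1, q_m = u², r_m = v², and q_j = r_j = 0 for j > m, define for each 1 ≤ i ≤ 2m the element P_i = Σ_{j+k=i} q_j · r_k ∈ S. Then the 2m elements P₁,…,P_{2m} are algebraically independent over ℚ. -/
open MvPolynomial Finset

-- multiset esymm basics
example {R : Type*} [CommSemiring R] (s : Multiset R) : s.esymm 0 = 1 := by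
  simp [Multiset.esymm]

lemma Multiset.esymm_eq_zero' {R : Type*} [CommSemiring R] {s : Multiset R} {n : ℕ}
    (h : Multiset.card s < n) : s.esymm n = 0 := by
  rw [Multiset.esymm, Multiset.powersetCard_eq_empty n h]
  simp

lemma Multiset.esymm_cons' {R : Type*} [CommSemiring R] (x : R) (s : Multiset R) (n : ℕ) :
    (x ::ₘ s).esymm (n + 1) = s.esymm (n + 1) + x * s.esymm n := by
  rw [Multiset.esymm, Multiset.powersetCard_cons, Multiset.map_add, Multiset.sum_add,
    Multiset.map_map]
  congr 1
  rw [Multiset.esymm, ← Multiset.sum_map_mul_left]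
  congr 1
  apply Multiset.map_congr rfl
  intro t _
  simp [Multiset.prod_cons]

lemma Multiset.esymm_zero' {R : Type*} [CommSemiring R] (s : Multiset R) : s.esymm 0 = 1 := by
  simp [Multiset.esymm]

lemma Multiset.esymm_add_conv {R : Type*} [CommSemiring R] (s t : Multiset R) (n : ℕ) :
    (s + t).esymm n = ∑ jk ∈ Finset.HasAntidiagonal.antidiagonal n, s.esymm jk.1 * t.esymm jk.2 := by
  induction s using Multiset.induction generalizing n with
  | empty =>
    rw [zero_add]
    rw [Finset.sum_eq_single_of_mem (0, n) (by simp)]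
    · simp [Multiset.esymm_zero']
    · rintro ⟨j, k⟩ hmem hne
      have hj : 0 < j := by
        rcases Nat.eq_zero_or_pos j with h | h
        · exact absurd (by simpa [h] using Finset.HasAntidiagonal.mem_antidiagonal.mp hmem) (by
            intro hk; apply hne; simp [h, ← hk])
        · exact h
      rw [Multiset.esymm_eq_zero' (by simpa using hj), zero_mul]
  | cons x s ih =>
    cases n with
    | zero => simp [Multiset.esymm_zero']
    | succ n =>
      rw [Multiset.cons_add, Multiset.esymm_cons', ih, ih,
        Finset.Nat.sum_antidiagonal_succ, Finset.Nat.sum_antidiagonal_succ (f := fun jk =>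
          (x ::ₘ s).esymm jk.1 * t.esymm jk.2)]
      simp only [Multiset.esymm_zero', Multiset.esymm_cons', one_mul]
      rw [Finset.mul_sum, add_assoc, ← Finset.sum_add_distrib]
      congr 1
      apply Finset.sum_congr rfl
      intro jk _
      ring

lemma MvPolynomial.expand_two_monomial {σ : Type*} {R : Type*} [CommSemiring R]
    (d : σ →₀ ℕ) (c : R) :
    expand 2 (monomial d c) = monomial (2 • d) c := by
  rw [expand_monomial, monomial_eq]

lemma MvPolynomial.coeff_expand_two {σ : Type*} {R : Type*} [CommSemiring R]
    (p : MvPolynomial σ R) (e : σ →₀ ℕ) :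
    coeff (2 • e) (expand 2 p) = coeff e p := by
  classical
  conv_lhs => rw [p.as_sum, map_sum]
  rw [coeff_sum]
  simp_rw [MvPolynomial.expand_two_monomial, coeff_monomial]
  have key : ∀ d : σ →₀ ℕ, (2 • d = 2 • e) = (d = e) := by
    intro d
    apply propext
    constructor
    · intro h
      ext i
      have := DFunLike.congr_fun h i
      simp only [Finsupp.smul_apply, smul_eq_mul] at this
      omega
    · rintro rfl; rfl
  simp_rw [key]
  rw [Finset.sum_ite_eq' p.support e (fun d => coeff d p)]
  split_ifs with h
  · rfl
  · exact (MvPolynomial.notMem_support_iff.mp h).symm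

lemma MvPolynomial.expand_two_injective {σ : Type*} {R : Type*} [CommRing R] :
    Function.Injective (expand 2 : MvPolynomial σ R →ₐ[R] MvPolynomial σ R) := by
  intro a b h
  have h0 : expand 2 (a - b) = 0 := by rw [map_sub, h, sub_self]
  have : a - b = 0 := by
    ext d
    rw [← MvPolynomial.coeff_expand_two (a - b) d, h0]
    simp
  exact sub_eq_zero.mp this

lemma esymm_indep (m : ℕ) :
    AlgebraicIndependent ℚ
      (fun i : Fin (2 * m) => esymm (Fin m ⊕ Fin m) ℚ ((i : ℕ) + 1)) := by
  rw [AlgebraicIndependent]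
  have hcomp : (aeval (fun i : Fin (2 * m) => esymm (Fin m ⊕ Fin m) ℚ ((i : ℕ) + 1)) :
      MvPolynomial (Fin (2 * m)) ℚ →ₐ[ℚ] MvPolynomial (Fin m ⊕ Fin m) ℚ) =
      (Subalgebra.val _).comp (esymmAlgHom (Fin m ⊕ Fin m) ℚ (2 * m)) := by
    apply MvPolynomial.algHom_ext
    intro i
    simp [esymmAlgHom, aeval_X]
  rw [hcomp]
  exact Subtype.val_injective.comp (esymmAlgHom_injective ℚ (by simp [Fintype.card_sum]; omega))

lemma expand_esymm_indep (m : ℕ) :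
    AlgebraicIndependent ℚ
      (fun i : Fin (2 * m) => expand 2 (esymm (Fin m ⊕ Fin m) ℚ ((i : ℕ) + 1))) := by
  have h := esymm_indep m
  rw [AlgebraicIndependent] at h ⊢
  have hcomp : (aeval (fun i : Fin (2 * m) => expand 2 (esymm (Fin m ⊕ Fin m) ℚ ((i : ℕ) + 1))) :
      MvPolynomial (Fin (2 * m)) ℚ →ₐ[ℚ] MvPolynomial (Fin m ⊕ Fin m) ℚ) =
      (expand 2).comp (aeval (fun i : Fin (2 * m) => esymm (Fin m ⊕ Fin m) ℚ ((i : ℕ) + 1))) := by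
    apply MvPolynomial.algHom_ext
    intro i
    simp
  rw [hcomp]
  exact MvPolynomial.expand_two_injective.comp h

/-- In `S = ℚ[q₁,…,q_{m-1},u,r₁,…,r_{m-1},v]`, with `q₀ = r₀ = 1`, `q_m = u²`,
`r_m = v²` and `q_j = r_j = 0` for `j > m`, the elements
`P_i = ∑_{j+k=i} q_j r_k` for `1 ≤ i ≤ 2m` are algebraically independent
over `ℚ`. -/
theorem algebraicIndependent_whitney_sum_classes_even (m : ℕ) (hm : 1 ≤ m)
    (q r : ℕ → MvPolynomial (Fin m ⊕ Fin m) ℚ)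
    (hq0 : q 0 = 1)
    (hqX : ∀ j : ℕ, ∀ h : 1 ≤ j, ∀ h' : j ≤ m - 1,
      q j = X (Sum.inl ⟨j - 1, by omega⟩))
    (hqm : q m = (X (Sum.inl ⟨m - 1, by omega⟩) : MvPolynomial (Fin m ⊕ Fin m) ℚ) ^ 2)
    (hq_top : ∀ j : ℕ, m < j → q j = 0)
    (hr0 : r 0 = 1)
    (hrX : ∀ j : ℕ, ∀ h : 1 ≤ j, ∀ h' : j ≤ m - 1,
      r j = X (Sum.inr ⟨j - 1, by omega⟩))
    (hrm : r m = (X (Sum.inr ⟨m - 1, by omega⟩) : MvPolynomial (Fin m ⊕ Fin m) ℚ) ^ 2)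
    (hr_top : ∀ j : ℕ, m < j → r j = 0) :
    AlgebraicIndependent ℚ
      (fun i : Fin (2 * m) =>
        ∑ jk ∈ Finset.HasAntidiagonal.antidiagonal ((i : ℕ) + 1), q jk.1 * r jk.2) := by
  classical
  have huniv : (Finset.univ : Finset (Fin m)).powersetCard m = {Finset.univ} := by
    simpa using Finset.powersetCard_self (Finset.univ : Finset (Fin m))
  set Lm : Multiset (MvPolynomial (Fin m ⊕ Fin m) ℚ) :=
    Multiset.map (fun k : Fin m => (X (Sum.inl k) : MvPolynomial (Fin m ⊕ Fin m) ℚ) ^ 2)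
      Finset.univ.val with hLm
  set Rm : Multiset (MvPolynomial (Fin m ⊕ Fin m) ℚ) :=
    Multiset.map (fun k : Fin m => (X (Sum.inr k) : MvPolynomial (Fin m ⊕ Fin m) ℚ) ^ 2)
      Finset.univ.val with hRm
  have card_Lm : Multiset.card Lm = m := by simp [hLm]
  have card_Rm : Multiset.card Rm = m := by simp [hRm]
  have hLprod : Lm.esymm m = ∏ k : Fin m, (X (Sum.inl k) : MvPolynomial (Fin m ⊕ Fin m) ℚ) ^ 2 := by
    rw [hLm, Finset.esymm_map_val, huniv, Finset.sum_singleton]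
  have hRprod : Rm.esymm m = ∏ k : Fin m, (X (Sum.inr k) : MvPolynomial (Fin m ⊕ Fin m) ℚ) ^ 2 := by
    rw [hRm, Finset.esymm_map_val, huniv, Finset.sum_singleton]
  set g : Fin m ⊕ Fin m → MvPolynomial (Fin m ⊕ Fin m) ℚ :=
    Sum.elim
      (fun j => if (j : ℕ) = m - 1 then ∏ k : Fin m, (X (Sum.inl k) : MvPolynomial (Fin m ⊕ Fin m) ℚ)
        else Lm.esymm ((j:ℕ)+1))
      (fun j => if (j : ℕ) = m - 1 then ∏ k : Fin m, (X (Sum.inr k) : MvPolynomial (Fin m ⊕ Fin m) ℚ)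
        else Rm.esymm ((j:ℕ)+1))
    with hg
  have hqg : ∀ j : ℕ, aeval g (q j) = Lm.esymm j := by
    intro j
    rcases Nat.lt_or_ge j 1 with h1 | h1
    · interval_cases j
      rw [hq0, map_one, Multiset.esymm_zero']
    rcases Nat.lt_or_ge j m with h2 | h2
    · rw [hqX j h1 (by omega), aeval_X, hg]
      simp only [Sum.elim_inl]
      rw [if_neg (by omega)]
      congr 1
      omega
    rcases Nat.eq_or_lt_of_le h2 with h3 | h3
    · obtain rfl : j = m := h3.symm
      rw [hqm, map_pow, aeval_X, hg]
      simp only [Sum.elim_inl]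
      simp only [if_pos trivial]
      rw [← Finset.prod_pow, hLprod]
    · rw [hq_top j h3, map_zero, Multiset.esymm_eq_zero' (by omega)]
  have hrg : ∀ j : ℕ, aeval g (r j) = Rm.esymm j := by
    intro j
    rcases Nat.lt_or_ge j 1 with h1 | h1
    · interval_cases j
      rw [hr0, map_one, Multiset.esymm_zero']
    rcases Nat.lt_or_ge j m with h2 | h2
    · rw [hrX j h1 (by omega), aeval_X, hg]
      simp only [Sum.elim_inr]
      rw [if_neg (by omega)]
      congr 1
      omega
    rcases Nat.eq_or_lt_of_le h2 with h3 | h3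
    · obtain rfl : j = m := h3.symm
      rw [hrm, map_pow, aeval_X, hg]
      simp only [Sum.elim_inr]
      simp only [if_pos trivial]
      rw [← Finset.prod_pow, hRprod]
    · rw [hr_top j h3, map_zero, Multiset.esymm_eq_zero' (by omega)]
  have hunion : Lm + Rm =
      Multiset.map (fun w : Fin m ⊕ Fin m => (X w : MvPolynomial (Fin m ⊕ Fin m) ℚ) ^ 2)
        (Finset.univ : Finset (Fin m ⊕ Fin m)).val := by
    rw [← Finset.univ_disjSum_univ, Finset.val_disjSum, Multiset.disjSum, Multiset.map_add,
      Multiset.map_map, Multiset.map_map]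
    rfl
  apply AlgebraicIndependent.of_comp (aeval g)
  have key : (⇑(aeval g) ∘ fun i : Fin (2 * m) =>
        ∑ jk ∈ Finset.HasAntidiagonal.antidiagonal ((i : ℕ) + 1), q jk.1 * r jk.2) =
      fun i : Fin (2 * m) => expand 2 (esymm (Fin m ⊕ Fin m) ℚ ((i : ℕ) + 1)) := by
    funext i
    simp only [Function.comp_apply, map_sum, map_mul]
    simp_rw [hqg, hrg]
    rw [← Multiset.esymm_add_conv, hunion,
      ← aeval_esymm_eq_multiset_esymm (Fin m ⊕ Fin m) ℚ ((i : ℕ) + 1)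
        (fun w : Fin m ⊕ Fin m => (X w : MvPolynomial (Fin m ⊕ Fin m) ℚ) ^ 2)]
    congr 1
  rw [key]
  exact expand_esymm_indep m
end
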